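/- Let κ > 0, λ > 0, a ∈ ℝ, and let Γ ⊂ ℝ be a finite nonempty set. Define f(ν) = (κ/2)(ν − a)² + λ·min_{g ∈ Γ}|ν − g|. Then f attains its global minimum over ℝ, and every global minimizer of f belongs to the finite candidate set {g + S_{λ/κ}(a − g) : g ∈ Γ}, where S_c(t) = sign(t)·max(|t| − c, 0) is the soft-thresholding operator. Consequently min_{ν∈ℝ} f(ν) = min_{g∈Γ} f(g + S_{λ/κ}(a − g)). -/

import Mathlib

/-- The soft-thresholding operator `S_c(t) = sign(t)·max(|t| − c, 0)`. -/
noncomputable def softThreshold (c t : ℝ) : ℝ := Real.sign t * max (|t| - c) 0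

/-- Core prox inequality for a single absolute value. -/
lemma softThreshold_key (κ lam b μ : ℝ) (hκ : 0 < κ) (hlam : 0 < lam) :
    κ / 2 * (softThreshold (lam / κ) b - b) ^ 2 + lam * |softThreshold (lam / κ) b|
      + κ / 2 * (μ - softThreshold (lam / κ) b) ^ 2 ≤
      κ / 2 * (μ - b) ^ 2 + lam * |μ| := by
  set c := lam / κ with hc
  have hc0 : 0 < c := div_pos hlam hκ
  have hκc : κ * c = lam := by rw [hc]; field_simp [hκ.ne']
  have hμ1 := le_abs_self μ
  have hμ2 := neg_abs_le μ
  rcases le_or_gt (|b|) c with hb | hb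
  · have ht : softThreshold c b = 0 := by
      simp [softThreshold, max_eq_right (by linarith : |b| - c ≤ 0)]
    rw [ht]
    have habs : κ * (μ * b) ≤ lam * |μ| := by
      have h1 : μ * b ≤ |μ| * |b| := by
        calc μ * b ≤ |μ * b| := le_abs_self _
          _ = |μ| * |b| := abs_mul _ _
      have h2 : |μ| * |b| ≤ |μ| * c := mul_le_mul_of_nonneg_left hb (abs_nonneg μ)
      calc κ * (μ * b) ≤ κ * (|μ| * c) := by
            exact mul_le_mul_of_nonneg_left (h1.trans h2) hκ.le
        _ = lam * |μ| := by rw [← hκc]; ring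
    simp only [abs_zero]
    nlinarith [habs]
  · have hbne : b ≠ 0 := by
      intro h; rw [h, abs_zero] at hb; linarith
    rcases lt_or_gt_of_ne hbne with hbneg | hbpos
    · have habsb : |b| = -b := abs_of_neg hbneg
      have ht : softThreshold c b = b + c := by
        rw [softThreshold, Real.sign_of_neg hbneg, habsb,
          max_eq_left (by linarith : (0:ℝ) ≤ -b - c)]
        ring
      have htneg : b + c < 0 := by rw [habsb] at hb; linarith
      rw [ht, abs_of_neg htneg]
      rw [← hκc]
      nlinarith [mul_nonneg (mul_nonneg hκ.le hc0.le) (by linarith : (0:ℝ) ≤ |μ| + μ)]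
    · have habsb : |b| = b := abs_of_pos hbpos
      have ht : softThreshold c b = b - c := by
        rw [softThreshold, Real.sign_of_pos hbpos, habsb,
          max_eq_left (by linarith : (0:ℝ) ≤ b - c)]
        ring
      have htpos : 0 < b - c := by rw [habsb] at hb; linarith
      rw [ht, abs_of_pos htpos]
      rw [← hκc]
      nlinarith [mul_nonneg (mul_nonneg hκ.le hc0.le) (by linarith : (0:ℝ) ≤ |μ| - μ)]

/-- Prox inequality shifted by `g`. -/
lemma softThreshold_prox (κ lam a g ν : ℝ) (hκ : 0 < κ) (hlam : 0 < lam) :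
    κ / 2 * ((g + softThreshold (lam / κ) (a - g)) - a) ^ 2
      + lam * |(g + softThreshold (lam / κ) (a - g)) - g|
      + κ / 2 * (ν - (g + softThreshold (lam / κ) (a - g))) ^ 2 ≤
      κ / 2 * (ν - a) ^ 2 + lam * |ν - g| := by
  have h := softThreshold_key κ lam (a - g) (ν - g) hκ hlam
  set t := softThreshold (lam / κ) (a - g) with hT
  have e1 : ((g + t) - a) ^ 2 = (t - (a - g)) ^ 2 := by ring
  have e2 : (ν - (g + t)) ^ 2 = ((ν - g) - t) ^ 2 := by ring
  have e3 : (ν - a) ^ 2 = ((ν - g) - (a - g)) ^ 2 := by ring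
  have e4 : (g + t) - g = t := by ring
  rw [e1, e2, e3, e4]
  exact h

theorem multi_directional_prox_candidates
    (κ lam a : ℝ) (hκ : 0 < κ) (hlam : 0 < lam)
    (Γ : Finset ℝ) (hΓ : Γ.Nonempty) :
    (∃ ν₀ : ℝ, ∀ ν : ℝ,
      κ / 2 * (ν₀ - a) ^ 2 + lam * Γ.inf' hΓ (fun g => |ν₀ - g|) ≤
        κ / 2 * (ν - a) ^ 2 + lam * Γ.inf' hΓ (fun g => |ν - g|)) ∧
    (∀ ν₀ : ℝ,
      (∀ ν : ℝ,
        κ / 2 * (ν₀ - a) ^ 2 + lam * Γ.inf' hΓ (fun g => |ν₀ - g|) ≤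
          κ / 2 * (ν - a) ^ 2 + lam * Γ.inf' hΓ (fun g => |ν - g|)) →
      ∃ g ∈ Γ, ν₀ = g + softThreshold (lam / κ) (a - g)) ∧
    (∀ ν : ℝ,
      Γ.inf' hΓ (fun g =>
        κ / 2 * ((g + softThreshold (lam / κ) (a - g)) - a) ^ 2 +
          lam * Γ.inf' hΓ (fun g' => |(g + softThreshold (lam / κ) (a - g)) - g'|)) ≤
        κ / 2 * (ν - a) ^ 2 + lam * Γ.inf' hΓ (fun g => |ν - g|)) := by
  -- Part 3 first (the key inequality).
  have P3 : ∀ ν : ℝ,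
      Γ.inf' hΓ (fun g =>
        κ / 2 * ((g + softThreshold (lam / κ) (a - g)) - a) ^ 2 +
          lam * Γ.inf' hΓ (fun g' => |(g + softThreshold (lam / κ) (a - g)) - g'|)) ≤
        κ / 2 * (ν - a) ^ 2 + lam * Γ.inf' hΓ (fun g => |ν - g|) := by
    intro ν
    obtain ⟨g₀, hg₀mem, hg₀⟩ := Finset.exists_mem_eq_inf' hΓ (fun g => |ν - g|)
    set t := g₀ + softThreshold (lam / κ) (a - g₀) with hT
    have h1 : Γ.inf' hΓ (fun g =>
        κ / 2 * ((g + softThreshold (lam / κ) (a - g)) - a) ^ 2 +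
          lam * Γ.inf' hΓ (fun g' => |(g + softThreshold (lam / κ) (a - g)) - g'|)) ≤
        κ / 2 * (t - a) ^ 2 + lam * Γ.inf' hΓ (fun g' => |t - g'|) :=
      Finset.inf'_le _ hg₀mem
    have h2 : Γ.inf' hΓ (fun g' => |t - g'|) ≤ |t - g₀| :=
      Finset.inf'_le _ hg₀mem
    have h3 := softThreshold_prox κ lam a g₀ ν hκ hlam
    rw [← hT] at h3
    have h4 : lam * Γ.inf' hΓ (fun g' => |t - g'|) ≤ lam * |t - g₀| :=
      mul_le_mul_of_nonneg_left h2 hlam.le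
    rw [hg₀]
    nlinarith [sq_nonneg (ν - t)]
  refine ⟨?_, ?_, P3⟩
  · obtain ⟨g₁, hg₁mem, hg₁⟩ := Finset.exists_mem_eq_inf' hΓ (fun g =>
      κ / 2 * ((g + softThreshold (lam / κ) (a - g)) - a) ^ 2 +
        lam * Γ.inf' hΓ (fun g' => |(g + softThreshold (lam / κ) (a - g)) - g'|))
    refine ⟨g₁ + softThreshold (lam / κ) (a - g₁), fun ν => ?_⟩
    have := P3 ν
    rw [hg₁] at this
    exact this
  · intro ν₀ hmin
    obtain ⟨g₀, hg₀mem, hg₀⟩ := Finset.exists_mem_eq_inf' hΓ (fun g => |ν₀ - g|)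
    refine ⟨g₀, hg₀mem, ?_⟩
    set t := g₀ + softThreshold (lam / κ) (a - g₀) with hT
    have h2 := hmin t
    have h3 : Γ.inf' hΓ (fun g => |t - g|) ≤ |t - g₀| :=
      Finset.inf'_le _ hg₀mem
    have h4 : lam * Γ.inf' hΓ (fun g => |t - g|) ≤ lam * |t - g₀| :=
      mul_le_mul_of_nonneg_left h3 hlam.le
    have h5 := softThreshold_prox κ lam a g₀ ν₀ hκ hlam
    rw [← hT] at h5
    rw [hg₀] at h2
    have hk : κ / 2 * (ν₀ - t) ^ 2 ≤ κ / 2 * 0 := by linarith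
    have hsq : (ν₀ - t) ^ 2 ≤ 0 :=
      le_of_mul_le_mul_left hk (by linarith : (0:ℝ) < κ / 2)
    have h0 : (ν₀ - t) ^ 2 = 0 := le_antisymm hsq (sq_nonneg _)
    have h00 : ν₀ - t = 0 := pow_eq_zero_iff two_ne_zero |>.mp h0
    exact sub_eq_zero.mp h00
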